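/- Let n ≥ 1, let J : ℝ → Matrix (Fin n) (Fin n) ℝ be continuous, and fix t₀ ∈ ℝ. Let v : ℝ → Matrix (Fin n) (Fin n) ℝ be differentiable with v′(t) = J(t) * v(t) for all t, and suppose v(t₀) = Q₀ * R₀ where Q₀ is orthogonal (Q₀ᵀ * Q₀ = 1) and R₀ is invertible. Let w : ℝ → Matrix (Fin n) (Fin n) ℝ be differentiable with w(0) = 1 and w′(τ) = (Q₀ᵀ * J(t₀ + τ) * Q₀) * w(τ) for all τ. Then for all τ ≥ 0, v(t₀ + τ) = Q₀ * w(τ) * R₀. -/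

import Mathlib

open Matrix Set

section Aux

attribute [local instance] Matrix.normedAddCommGroup Matrix.normedSpace

private lemma aux_norm_mul_le {n : ℕ} (A B : Matrix (Fin n) (Fin n) ℝ) :
    ‖A * B‖ ≤ (∑ i, ∑ k, ‖A i k‖) * ‖B‖ := by
  have hnn : 0 ≤ (∑ i, ∑ k, ‖A i k‖) * ‖B‖ :=
    mul_nonneg (Finset.sum_nonneg fun i _ => Finset.sum_nonneg fun k _ => norm_nonneg _)
      (norm_nonneg _)
  rw [Matrix.norm_le_iff hnn]
  intro i
  intro j
  calc ‖(A * B) i j‖ = ‖∑ k, A i k * B k j‖ := by rw [Matrix.mul_apply]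
    _ ≤ ∑ k, ‖A i k * B k j‖ := norm_sum_le _ _
    _ ≤ ∑ k, ‖A i k‖ * ‖B‖ := by
        refine Finset.sum_le_sum fun k _ => ?_
        rw [norm_mul]
        exact mul_le_mul_of_nonneg_left
          (Matrix.norm_entry_le_entrywise_sup_norm B) (norm_nonneg _)
    _ = (∑ k, ‖A i k‖) * ‖B‖ := (Finset.sum_mul _ _ _).symm
    _ ≤ (∑ i, ∑ k, ‖A i k‖) * ‖B‖ := by
        refine mul_le_mul_of_nonneg_right ?_ (norm_nonneg _)
        exact Finset.single_le_sum
          (fun i _ => Finset.sum_nonneg fun k _ => norm_nonneg _) (Finset.mem_univ i)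

/-- Uniqueness for the linear matrix ODE `f' = A t * f` on `[0, ∞)`. -/
private lemma aux_linear_ode_unique {n : ℕ} (A : ℝ → Matrix (Fin n) (Fin n) ℝ)
    (hA : ∀ i j : Fin n, Continuous fun t => A t i j)
    (f g : ℝ → Matrix (Fin n) (Fin n) ℝ)
    (hf : ∀ t (i j : Fin n), HasDerivAt (fun s => f s i j) ((A t * f t) i j) t)
    (hg : ∀ t (i j : Fin n), HasDerivAt (fun s => g s i j) ((A t * g t) i j) t)
    (h0 : f 0 = g 0) : ∀ t, 0 ≤ t → f t = g t := by
  have hf' : ∀ t, HasDerivAt f (A t * f t) t := fun t =>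
    hasDerivAt_pi.mpr fun i => hasDerivAt_pi.mpr fun j => hf t i j
  have hg' : ∀ t, HasDerivAt g (A t * g t) t := fun t =>
    hasDerivAt_pi.mpr fun i => hasDerivAt_pi.mpr fun j => hg t i j
  intro T hT
  -- clamp the coefficient to the compact interval [0, T]
  set B : ℝ → Matrix (Fin n) (Fin n) ℝ := fun t => A (min (max t 0) T) with hB
  have hclamp : ∀ t ∈ Ico (0:ℝ) T, B t = A t := by
    intro t ht
    simp [hB, max_eq_left ht.1, min_eq_left ht.2.le]
  set C : ℝ → ℝ := fun t => ∑ i, ∑ k, ‖A t i k‖ with hC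
  have hCc : Continuous C := by
    apply continuous_finset_sum
    intro i _
    apply continuous_finset_sum
    intro k _
    exact (hA i k).norm
  obtain ⟨K, hK⟩ := (isCompact_Icc (a := (0:ℝ)) (b := T)).exists_bound_of_continuousOn
    hCc.continuousOn
  have hBK : ∀ t : ℝ, C (min (max t 0) T) ≤ K := by
    intro t
    have hmem : min (max t 0) T ∈ Icc (0:ℝ) T :=
      ⟨le_min (le_max_right _ _) hT, min_le_right _ _⟩
    exact (le_abs_self _).trans ((Real.norm_eq_abs _) ▸ hK _ hmem)
  have hlip : ∀ t : ℝ, LipschitzOnWith (Real.toNNReal K)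
      (fun x => B t * x) (univ : Set (Matrix (Fin n) (Fin n) ℝ)) := by
    intro t
    rw [lipschitzOnWith_iff_dist_le_mul]
    intro x _ y _
    have h1 : dist (B t * x) (B t * y) = ‖B t * (x - y)‖ := by
      rw [dist_eq_norm, ← Matrix.mul_sub]
    rw [h1]
    calc ‖B t * (x - y)‖ ≤ (∑ i, ∑ k, ‖B t i k‖) * ‖x - y‖ := aux_norm_mul_le _ _
      _ ≤ (Real.toNNReal K) * ‖x - y‖ := by
          refine mul_le_mul_of_nonneg_right ?_ (norm_nonneg _)
          exact ((hBK t).trans (Real.le_coe_toNNReal K))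
      _ = (Real.toNNReal K) * dist x y := by rw [dist_eq_norm]
  have key : EqOn f g (Icc 0 T) := by
    refine ODE_solution_unique_of_mem_Icc_right (fun t _ => hlip t)
      (fun t _ => (hf' t).continuousAt.continuousWithinAt)
      (fun t ht => hclamp t ht ▸ (hf' t).hasDerivWithinAt)
      (fun _ _ => mem_univ _)
      (fun t _ => (hg' t).continuousAt.continuousWithinAt)
      (fun t ht => hclamp t ht ▸ (hg' t).hasDerivWithinAt)
      (fun _ _ => mem_univ _) h0
  exact key ⟨hT, le_refl T⟩

end Aux

/-- Restarting lemma for the QR/Cayley method: if `v` solves `v′ = J(t) v` and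
`v(t₀) = Q₀ R₀` with `Q₀` orthogonal and `R₀` invertible, and `w` solves the
transformed variational equation `w′(τ) = (Q₀ᵀ J(t₀ + τ) Q₀) w(τ)` with
`w(0) = 1`, then `v(t₀ + τ) = Q₀ w(τ) R₀` for all `τ ≥ 0`. -/
theorem qr_restarting_lemma
    (n : ℕ) (hn : 1 ≤ n)
    (J : ℝ → Matrix (Fin n) (Fin n) ℝ) (hJ : Continuous J)
    (t₀ : ℝ)
    (v : ℝ → Matrix (Fin n) (Fin n) ℝ)
    (hv : ∀ (t : ℝ) (i j : Fin n),
      HasDerivAt (fun τ => v τ i j) ((J t * v t) i j) t)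
    (Q₀ R₀ : Matrix (Fin n) (Fin n) ℝ)
    (hdecomp : v t₀ = Q₀ * R₀)
    (horth : Q₀ᵀ * Q₀ = 1)
    (hR₀ : IsUnit R₀)
    (w : ℝ → Matrix (Fin n) (Fin n) ℝ)
    (hw0 : w 0 = 1)
    (hw : ∀ (τ : ℝ) (i j : Fin n),
      HasDerivAt (fun σ => w σ i j) (((Q₀ᵀ * J (t₀ + τ) * Q₀) * w τ) i j) τ) :
    ∀ τ : ℝ, 0 ≤ τ → v (t₀ + τ) = Q₀ * w τ * R₀ := by
  have horth' : Q₀ * Q₀ᵀ = 1 := mul_eq_one_comm.mp horth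
  set A : ℝ → Matrix (Fin n) (Fin n) ℝ := fun t => J (t₀ + t) with hA
  set f : ℝ → Matrix (Fin n) (Fin n) ℝ := fun t => v (t₀ + t) with hfdef
  set g : ℝ → Matrix (Fin n) (Fin n) ℝ := fun t => Q₀ * w t * R₀ with hgdef
  have hAc : ∀ i j : Fin n, Continuous fun t => A t i j := by
    intro i j
    exact (continuous_apply j).comp ((continuous_apply i).comp
      (hJ.comp (continuous_const.add continuous_id)))
  have hf : ∀ t (i j : Fin n), HasDerivAt (fun s => f s i j) ((A t * f t) i j) t := by
    intro t i j
    have h2 : HasDerivAt (fun s : ℝ => t₀ + s) 1 t := by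
      simpa using (hasDerivAt_id t).const_add t₀
    have := (hv (t₀ + t) i j).comp t h2
    rw [mul_one] at this
    exact this
  have hg : ∀ t (i j : Fin n), HasDerivAt (fun s => g s i j) ((A t * g t) i j) t := by
    intro t i j
    set d : Matrix (Fin n) (Fin n) ℝ := (Q₀ᵀ * J (t₀ + t) * Q₀) * w t with hd
    have key : Q₀ * d * R₀ = A t * g t := by
      simp only [hd, hgdef, hA, ← mul_assoc, horth', one_mul]
    have h1 : HasDerivAt (fun s => ∑ l, (∑ k, Q₀ i k * w s k l) * R₀ l j)
        (∑ l, (∑ k, Q₀ i k * d k l) * R₀ l j) t := by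
      refine HasDerivAt.fun_sum fun l _ => ?_
      exact (HasDerivAt.fun_sum fun k _ => (hw t k l).const_mul (Q₀ i k)).mul_const (R₀ l j)
    have hfun : (fun s => g s i j) = fun s => ∑ l, (∑ k, Q₀ i k * w s k l) * R₀ l j := by
      funext s
      simp [hgdef, Matrix.mul_apply]
    have hval : (A t * g t) i j = ∑ l, (∑ k, Q₀ i k * d k l) * R₀ l j := by
      rw [← key]
      simp [Matrix.mul_apply]
    rw [hfun, hval]
    exact h1
  have h0 : f 0 = g 0 := by
    simp [hfdef, hgdef, hdecomp, hw0]
  intro τ hτ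
  exact aux_linear_ode_unique A hAc f g hf hg h0 τ hτ
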